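/- Let P ⊆ ℝ^d be a set of n points, and k ≥ 1, σ ≥ 1. Then there exist k pairwise disjoint subsets C_1, ..., C_k ⊆ P, each of size at least ⌈c(d)·n/(k σ^d)⌉ for a suitable constant c(d) > 0 depending only on d, such that for all i < j: dist(C_i, C_j) ≥ σ·diam(C_i); in particular the collection is semi σ-separated. -/

import Mathlib

open Metric MeasureTheory ENNReal

variable {d : ℕ}
local notation "E" => EuclideanSpace ℝ (Fin d)

/-- Packing bound: a δ-separated finset inside a ball of radius R has few points. -/
lemma packing (T : Finset (EuclideanSpace ℝ (Fin d))) (p : EuclideanSpace ℝ (Fin d))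
    {δ R : ℝ} (hδ : 0 < δ) (hR : 0 ≤ R)
    (hT : ∀ t ∈ T, dist t p ≤ R)
    (hsep : ∀ s ∈ T, ∀ t ∈ T, s ≠ t → δ < dist s t) :
    (T.card : ℝ) ≤ (2 * R / δ + 1) ^ d := by
  have hδ2 : (0:ℝ) < δ/2 := by linarith
  -- disjoint balls
  have hdisj : (T : Set (EuclideanSpace ℝ (Fin d))).PairwiseDisjoint
      (fun t => ball t (δ/2)) := by
    intro s hs t ht hst
    apply ball_disjoint_ball
    have := hsep s hs t ht hst
    linarith
  have hsub : ∀ t ∈ T, ball t (δ/2) ⊆ ball p (R + δ/2) := by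
    intro t ht x hx
    rw [mem_ball] at hx ⊢
    have := hT t ht
    calc dist x p ≤ dist x t + dist t p := dist_triangle _ _ _
      _ < R + δ/2 := by linarith
  have hvol : ∑ t ∈ T, volume (ball t (δ/2)) ≤ volume (ball p (R + δ/2)) := by
    rw [← measure_biUnion_finset hdisj (fun t _ => measurableSet_ball)]
    exact measure_mono (Set.iUnion₂_subset hsub)
  have hb : ∀ (x : EuclideanSpace ℝ (Fin d)) (r : ℝ), 0 < r → volume (ball x r)
      = ENNReal.ofReal (r ^ d) * volume (ball (0 : EuclideanSpace ℝ (Fin d)) 1) := by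
    intro x r hr
    rw [Measure.addHaar_ball_of_pos _ _ hr, finrank_euclideanSpace_fin]
  have hV0 : 0 < volume (ball (0 : EuclideanSpace ℝ (Fin d)) 1) := measure_ball_pos _ _ one_pos
  have hVt : volume (ball (0 : EuclideanSpace ℝ (Fin d)) 1) ≠ ⊤ := measure_ball_lt_top.ne
  rw [Finset.sum_congr rfl (fun t ht => hb t _ hδ2), hb p _ (by linarith),
    Finset.sum_const, nsmul_eq_mul] at hvol
  have hcard : (T.card : ℝ≥0∞) * ENNReal.ofReal ((δ/2) ^ d) ≤ ENNReal.ofReal ((R + δ/2) ^ d) := by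
    rwa [← mul_assoc, ENNReal.mul_le_mul_iff_left (by exact_mod_cast hV0.ne') hVt] at hvol
  have hreal : (T.card : ℝ) * (δ/2) ^ d ≤ (R + δ/2) ^ d := by
    have h2 : ENNReal.ofReal ((T.card : ℝ) * (δ/2) ^ d) ≤ ENNReal.ofReal ((R + δ/2) ^ d) := by
      rwa [ENNReal.ofReal_mul (by positivity), ENNReal.ofReal_natCast]
    exact (ENNReal.ofReal_le_ofReal_iff (by positivity)).mp h2
  have hpow : ((R + δ/2) / (δ/2)) ^ d = (2 * R / δ + 1) ^ d := by
    congr 1; field_simp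
  rw [← hpow, div_pow]
  rw [le_div_iff₀ (by positivity)]
  exact hreal

/-- Counting: if every point of `Q` has < s points of `Q` within r/2, then any ball of
radius (2σ+2)r contains at most (17σ)^d * s points of `Q`. -/
lemma counting (Q : Finset (EuclideanSpace ℝ (Fin d))) (p : EuclideanSpace ℝ (Fin d))
    {r σ : ℝ} {s : ℕ} (hr : 0 < r) (hσ : 1 ≤ σ)
    (hmin : ∀ q ∈ Q, ((Q.filter (fun x => dist x q ≤ r/2)).card) < s) :
    ((Q.filter (fun x => dist x p ≤ (2*σ+2)*r)).card : ℝ) ≤ (17*σ)^d * s := by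
  classical
  set R : ℝ := (2*σ+2)*r with hR
  set δ : ℝ := r/2 with hδdef
  have hδ : 0 < δ := by positivity
  have hRpos : 0 < R := by rw [hR]; positivity
  set S := Q.filter (fun x => dist x p ≤ R) with hS
  -- maximal δ-separated subset of S
  set 𝒯 := S.powerset.filter
    (fun T => ∀ a ∈ T, ∀ b ∈ T, a ≠ b → δ < dist a b) with h𝒯
  have hne : 𝒯.Nonempty := ⟨∅, by simp [h𝒯]⟩
  obtain ⟨T, hT𝒯, hTmax⟩ := Finset.exists_max_image 𝒯 Finset.card hne
  rw [h𝒯, Finset.mem_filter, Finset.mem_powerset] at hT𝒯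
  obtain ⟨hTS, hTsep⟩ := hT𝒯
  -- covering: every q ∈ S is within δ of some t ∈ T
  have hcov : ∀ q ∈ S, ∃ t ∈ T, dist q t ≤ δ := by
    intro q hq
    by_contra hcon
    push_neg at hcon
    have hqT : q ∉ T := fun h => absurd (by simpa using hcon q h) (not_lt.mpr hδ.le)
    have : insert q T ∈ 𝒯 := by
      rw [h𝒯, Finset.mem_filter, Finset.mem_powerset]
      refine ⟨Finset.insert_subset hq hTS, ?_⟩
      intro a ha b hb hab
      rcases Finset.mem_insert.mp ha with ha' | ha' <;>
        rcases Finset.mem_insert.mp hb with hb' | hb'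
      · exact absurd (ha'.trans hb'.symm) hab
      · rw [ha']; exact hcon b hb'
      · rw [hb', dist_comm]; exact hcon a ha'
      · exact hTsep a ha' b hb' hab
    have := hTmax _ this
    rw [Finset.card_insert_of_notMem hqT] at this
    omega
  -- S covered by balls around T
  have hScard : S.card ≤ T.card * s := by
    have hsub : S ⊆ T.biUnion (fun t => Q.filter (fun x => dist x t ≤ δ)) := by
      intro q hq
      obtain ⟨t, ht, hdt⟩ := hcov q hq
      exact Finset.mem_biUnion.mpr ⟨t, ht, Finset.mem_filter.mpr
        ⟨(Finset.mem_filter.mp hq).1, hdt⟩⟩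
    calc S.card ≤ (T.biUnion (fun t => Q.filter (fun x => dist x t ≤ δ))).card :=
          Finset.card_le_card hsub
      _ ≤ ∑ t ∈ T, (Q.filter (fun x => dist x t ≤ δ)).card := Finset.card_biUnion_le
      _ ≤ ∑ _t ∈ T, s := Finset.sum_le_sum (fun t ht =>
          (hmin t (hTS.trans (Finset.filter_subset _ _) ht)).le)
      _ = T.card * s := by rw [Finset.sum_const, smul_eq_mul]
  -- packing bound on T
  have hTcard : (T.card : ℝ) ≤ (2 * R / δ + 1) ^ d := by
    apply packing T p hδ hRpos.le
    · intro t ht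
      exact (Finset.mem_filter.mp (hTS ht)).2
    · exact hTsep
  have hgeom : (2 * R / δ + 1 : ℝ) ≤ 17 * σ := by
    have hq : 2 * R / δ = 8*σ + 8 := by
      rw [hR, hδdef]; field_simp; ring
    rw [hq]; linarith
  have h1 : (0:ℝ) ≤ 2 * R / δ + 1 := by positivity
  calc (S.card : ℝ) ≤ (T.card : ℝ) * s := by exact_mod_cast hScard
    _ ≤ (2 * R / δ + 1) ^ d * s := by
        apply mul_le_mul_of_nonneg_right hTcard (by positivity)
    _ ≤ (17*σ)^d * s := by
        apply mul_le_mul_of_nonneg_right (pow_le_pow_left₀ h1 hgeom d) (by positivity)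

/-- Greedy step: extract one cluster `C` of size `≥ s` plus a deletion set `D`
of size `≤ (17σ)^d s` such that `C` is `σ diam`-separated from `Q \ D`. -/
lemma step (Q : Finset (EuclideanSpace ℝ (Fin d))) {σ : ℝ} {s : ℕ}
    (hσ : 1 ≤ σ) (hs : 2 ≤ s) (hQ : s ≤ Q.card) :
    ∃ C D : Finset (EuclideanSpace ℝ (Fin d)), C ⊆ D ∧ D ⊆ Q ∧ s ≤ C.card ∧
      ((D.card : ℝ) ≤ (17*σ)^d * s) ∧
      ∀ x ∈ C, ∀ q ∈ Q, q ∉ D → σ * Metric.diam (C : Set (EuclideanSpace ℝ (Fin d))) ≤ dist x q := by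
  classical
  have hQne : Q.Nonempty := Finset.card_pos.mp (by omega)
  obtain ⟨p₀, hp₀⟩ := hQne
  set Dists := (Q ×ˢ Q).image (fun pq => dist pq.1 pq.2) with hDists
  set Cands := Dists.filter
    (fun ρ => ∃ p ∈ Q, s ≤ (Q.filter (fun x => dist x p ≤ ρ)).card) with hCands
  have hCne : Cands.Nonempty := by
    have him : ((Q.image (fun x => dist x p₀))).Nonempty := ⟨_, Finset.mem_image_of_mem _ hp₀⟩
    set ρmax := (Q.image (fun x => dist x p₀)).max' him with hρmax
    obtain ⟨x₀, hx₀Q, hx₀⟩ := Finset.mem_image.mp ((Q.image (fun x => dist x p₀)).max'_mem him)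
    refine ⟨ρmax, Finset.mem_filter.mpr ⟨?_, p₀, hp₀, ?_⟩⟩
    · exact Finset.mem_image.mpr ⟨(x₀, p₀), Finset.mem_product.mpr ⟨hx₀Q, hp₀⟩, hx₀⟩
    · have : Q.filter (fun x => dist x p₀ ≤ ρmax) = Q := by
        apply Finset.filter_true_of_mem
        intro x hx
        rw [hρmax]
        exact Finset.le_max' (Q.image (fun y => dist y p₀)) (dist x p₀)
          (Finset.mem_image_of_mem _ hx)
      rw [this]; exact hQ
  set r := Cands.min' hCne with hrdef
  have hrC : r ∈ Cands := Cands.min'_mem hCne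
  obtain ⟨hrD, p, hpQ, hpcount⟩ := Finset.mem_filter.mp hrC
  -- r > 0
  have hr : 0 < r := by
    by_contra h
    push_neg at h
    have : Q.filter (fun x => dist x p ≤ r) ⊆ {p} := by
      intro x hx
      obtain ⟨_, hxd⟩ := Finset.mem_filter.mp hx
      have : dist x p = 0 := le_antisymm (hxd.trans h) dist_nonneg
      simp [dist_eq_zero.mp this]
    have h1 := Finset.card_le_card this
    rw [Finset.card_singleton] at h1
    omega
  -- minimality: every point has < s points within r/2
  have hmin : ∀ q ∈ Q, ((Q.filter (fun x => dist x q ≤ r/2)).card) < s := by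
    intro q hq
    by_contra hcon
    push_neg at hcon
    set F := Q.filter (fun x => dist x q ≤ r/2) with hF
    have hFne : F.Nonempty := ⟨q, Finset.mem_filter.mpr ⟨hq, by simp; positivity⟩⟩
    have him : ((F.image (fun x => dist x q))).Nonempty := hFne.image _
    set ρ' := (F.image (fun x => dist x q)).max' him with hρ'
    obtain ⟨x₁, hx₁F, hx₁⟩ := Finset.mem_image.mp ((F.image (fun x => dist x q)).max'_mem him)
    have hx₁Q : x₁ ∈ Q := (Finset.filter_subset _ _) hx₁F
    have hρ'le : ρ' ≤ r/2 := by
      rw [hρ', ← hx₁]; exact (Finset.mem_filter.mp hx₁F).2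
    have hρ'C : ρ' ∈ Cands := by
      refine Finset.mem_filter.mpr ⟨?_, q, hq, ?_⟩
      · exact Finset.mem_image.mpr ⟨(x₁, q), Finset.mem_product.mpr ⟨hx₁Q, hq⟩, hx₁⟩
      · refine le_trans hcon (Finset.card_le_card ?_)
        intro x hx
        obtain ⟨hxQ, _⟩ := Finset.mem_filter.mp hx
        refine Finset.mem_filter.mpr ⟨hxQ, ?_⟩
        rw [hρ']
        exact Finset.le_max' (F.image (fun y => dist y q)) (dist x q)
          (Finset.mem_image_of_mem _ hx)
    have := Cands.min'_le _ hρ'C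
    rw [← hrdef] at this
    linarith
  -- define C and D
  refine ⟨Q.filter (fun x => dist x p ≤ r), Q.filter (fun x => dist x p ≤ (2*σ+2)*r),
    ?_, Finset.filter_subset _ _, hpcount, counting Q p hr hσ hmin, ?_⟩
  · intro x hx
    obtain ⟨h1, h2⟩ := Finset.mem_filter.mp hx
    refine Finset.mem_filter.mpr ⟨h1, ?_⟩
    nlinarith
  · intro x hx q hqQ hqD
    obtain ⟨hxQ, hxd⟩ := Finset.mem_filter.mp hx
    have hqd : (2*σ+2)*r < dist q p := by
      by_contra h
      push_neg at h
      exact hqD (Finset.mem_filter.mpr ⟨hqQ, h⟩)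
    have hdiam : Metric.diam ((Q.filter (fun x => dist x p ≤ r) : Finset _) :
        Set (EuclideanSpace ℝ (Fin d))) ≤ 2*r := by
      apply Metric.diam_le_of_forall_dist_le (by positivity)
      intro a ha b hb
      simp only [Finset.coe_filter, Set.mem_setOf_eq] at ha hb
      calc dist a b ≤ dist a p + dist p b := dist_triangle _ _ _
        _ ≤ r + r := add_le_add ha.2 (by rw [dist_comm]; exact hb.2)
        _ = 2*r := by ring
    have hdx : (2*σ+1)*r ≤ dist x q := by
      have := dist_triangle q x p
      have hxq : dist x q = dist q x := dist_comm x q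
      nlinarith [dist_nonneg (x := q) (y := x)]
    calc σ * Metric.diam _ ≤ σ * (2*r) := by
          apply mul_le_mul_of_nonneg_left hdiam (by linarith)
      _ ≤ (2*σ+1)*r := by nlinarith
      _ ≤ dist x q := hdx

lemma rec_clusters (σ : ℝ) (s : ℕ) (hσ : 1 ≤ σ) (hs : 2 ≤ s) :
    ∀ (j : ℕ) (Q : Finset (EuclideanSpace ℝ (Fin d))),
      (j : ℝ) * ((17*σ)^d * s) ≤ Q.card →
    ∃ C : Fin j → Finset (EuclideanSpace ℝ (Fin d)),
      (∀ i, C i ⊆ Q) ∧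
      (∀ i i', i ≠ i' → Disjoint (C i) (C i')) ∧
      (∀ i, s ≤ (C i).card) ∧
      (∀ i i', i < i' → ∀ p ∈ C i, ∀ q ∈ C i',
        σ * Metric.diam (↑(C i) : Set (EuclideanSpace ℝ (Fin d))) ≤ dist p q) := by
  classical
  intro j
  induction j with
  | zero =>
    intro Q _
    exact ⟨fun i => i.elim0, fun i => i.elim0, fun i => i.elim0,
      fun i => i.elim0, fun i => i.elim0⟩
  | succ j ih =>
    intro Q hQ
    have hσ17 : (1:ℝ) ≤ (17*σ)^d := one_le_pow₀ (by linarith)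
    have hsQ : s ≤ Q.card := by
      have h1 : (s:ℝ) ≤ Q.card := by
        calc (s:ℝ) = 1 * (1 * s) := by ring
          _ ≤ (j+1 : ℝ) * ((17*σ)^d * s) := by
              apply mul_le_mul (by exact_mod_cast Nat.le_add_left 1 j)
                (mul_le_mul_of_nonneg_right hσ17 (by positivity)) (by positivity) (by positivity)
          _ ≤ Q.card := by exact_mod_cast hQ
      exact_mod_cast h1
    obtain ⟨C₀, D, hCD, hDQ, hC₀card, hDcard, hsep₀⟩ := step Q hσ hs hsQ
    have hQ' : (j : ℝ) * ((17*σ)^d * s) ≤ ((Q \ D).card : ℝ) := by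
      rw [Finset.card_sdiff_of_subset hDQ]
      have hDle : D.card ≤ Q.card := Finset.card_le_card hDQ
      have : ((Q \ D).card : ℝ) = (Q.card : ℝ) - D.card := by
        rw [Finset.card_sdiff_of_subset hDQ]; push_cast [hDle]; ring
      rw [← Finset.card_sdiff_of_subset hDQ, this]
      have : ((j:ℝ)+1) * ((17*σ)^d * s) ≤ Q.card := by push_cast at hQ ⊢; linarith
      nlinarith
    obtain ⟨C', hC'Q, hC'disj, hC'card, hC'sep⟩ := ih (Q \ D) hQ'
    refine ⟨Fin.cases C₀ C', ?_, ?_, ?_, ?_⟩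
    · intro i
      induction i using Fin.cases with
      | zero => simpa using hCD.trans hDQ
      | succ i => simpa using (hC'Q i).trans (Finset.sdiff_subset)
    · intro i i' hne
      have hdisj0 : ∀ i₂, Disjoint C₀ (C' i₂) := by
        intro i₂
        apply Finset.disjoint_left.mpr
        intro a haC₀ haC'
        have := (hC'Q i₂) haC'
        exact (Finset.mem_sdiff.mp this).2 (hCD haC₀)
      induction i using Fin.cases with
      | zero =>
        induction i' using Fin.cases with
        | zero => exact absurd rfl hne
        | succ i₂ => simpa using hdisj0 i₂
      | succ i₁ =>
        induction i' using Fin.cases with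
        | zero => simpa using (hdisj0 i₁).symm
        | succ i₂ =>
          have : i₁ ≠ i₂ := fun h => hne (by rw [h])
          simpa using hC'disj i₁ i₂ this
    · intro i
      induction i using Fin.cases with
      | zero => simpa using hC₀card
      | succ i => simpa using hC'card i
    · intro i i' hlt p hp q hq
      induction i using Fin.cases with
      | zero =>
        induction i' using Fin.cases with
        | zero => exact absurd hlt (lt_irrefl _)
        | succ i₂ =>
          simp only [Fin.cases_zero] at hp ⊢
          simp only [Fin.cases_succ] at hq
          have hqQD := (hC'Q i₂) hq
          obtain ⟨hqQ, hqD⟩ := Finset.mem_sdiff.mp hqQD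
          exact hsep₀ p hp q hqQ hqD
      | succ i₁ =>
        induction i' using Fin.cases with
        | zero => exact absurd hlt (Fin.not_lt_zero _).elim
        | succ i₂ =>
          simp only [Fin.cases_succ] at hp hq ⊢
          exact hC'sep i₁ i₂ (by simpa [Fin.succ_lt_succ_iff] using hlt) p hp q hq


/-- For any `n`-point set `P ⊆ ℝ^d`, `k ≥ 1` and `σ ≥ 1` (with `n`
large enough that `c(d)·n/(kσ^d) ≥ 1`), there exist `k` pairwise disjoint
subsets `C₁,...,C_k ⊆ P`, each of size at least `⌈c(d)·n/(kσ^d)⌉`, such that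
for all `i < j` every pair of points from `C_i` and `C_j` is at distance at
least `σ·diam(C_i)`; in particular the collection is semi `σ`-separated. -/
theorem stmt14 (d : ℕ) : ∃ c : ℝ, 0 < c ∧
    ∀ (P : Finset (EuclideanSpace ℝ (Fin d))) (k : ℕ) (σ : ℝ), 1 ≤ k → 1 ≤ σ →
    1 ≤ c * P.card / (k * σ^d) →
    ∃ C : Fin k → Finset (EuclideanSpace ℝ (Fin d)),
      (∀ i, C i ⊆ P) ∧
      (∀ i j, i ≠ j → Disjoint (C i) (C j)) ∧
      (∀ i, ⌈c * P.card / (k * σ^d)⌉₊ ≤ (C i).card) ∧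
      (∀ i j : Fin k, i < j → ∀ p ∈ C i, ∀ q ∈ C j,
        σ * Metric.diam (↑(C i) : Set (EuclideanSpace ℝ (Fin d))) ≤ dist p q) := by
  classical
  refine ⟨1/(2*17^d), by positivity, ?_⟩
  intro P k σ hk hσ hm
  set c : ℝ := 1/(2*17^d) with hc
  set m : ℝ := c * P.card / (k * σ^d) with hmdef
  have hσd : (1:ℝ) ≤ σ^d := one_le_pow₀ hσ
  have hk1 : (1:ℝ) ≤ k := by exact_mod_cast hk
  have hkσ : (0:ℝ) < k * σ^d := by nlinarith
  have hmmul : m * (k * σ^d) = c * P.card := div_mul_cancel₀ _ hkσ.ne'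
  set s : ℕ := ⌈m⌉₊ with hsdef
  have hs1 : 1 ≤ s := Nat.one_le_iff_ne_zero.mpr (by
    intro h
    rw [hsdef] at h
    have := Nat.ceil_eq_zero.mp h
    linarith)
  rcases le_or_gt 2 s with h2 | h1
  · -- main case: s ≥ 2, use the greedy machinery
    have hslt : (s : ℝ) < m + 1 := Nat.ceil_lt_add_one (by linarith)
    have hs2m : (s : ℝ) ≤ 2 * m := by linarith
    have key : (k:ℝ) * ((17*σ)^d * s) ≤ P.card := by
      have hmp : (17*σ:ℝ)^d = 17^d * σ^d := mul_pow 17 σ d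
      have h17 : (0:ℝ) < 17^d := by positivity
      have hcval : c * (2 * 17^d) = 1 := by
        rw [hc]; field_simp
      calc (k:ℝ) * ((17*σ)^d * s) ≤ (k:ℝ) * ((17^d * σ^d) * (2*m)) := by
            rw [hmp]
            apply mul_le_mul_of_nonneg_left _ (by positivity)
            apply mul_le_mul_of_nonneg_left hs2m (by positivity)
        _ = (2 * 17^d) * (m * (k * σ^d)) := by ring
        _ = (2 * 17^d) * (c * P.card) := by rw [hmmul]
        _ = (c * (2 * 17^d)) * P.card := by ring
        _ = P.card := by rw [hcval, one_mul]
    obtain ⟨C, hCP, hCdisj, hCcard, hCsep⟩ := rec_clusters σ s hσ h2 k P key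
    exact ⟨C, hCP, hCdisj, hCcard, hCsep⟩
  · -- s = 1: take k distinct singletons
    have hs : s = 1 := by omega
    have hkP : k ≤ P.card := by
      have h1 : (k:ℝ) ≤ P.card := by
        have hcn : (k:ℝ) * σ^d ≤ c * P.card := by
          rw [hmdef] at hm
          calc (k:ℝ) * σ^d = 1 * (k * σ^d) := by ring
            _ ≤ m * (k * σ^d) := by nlinarith
            _ = c * P.card := hmmul
        have hc1 : c ≤ 1 := by
          rw [hc]
          rw [div_le_one (by positivity)]
          have : (1:ℝ) ≤ 17^d := one_le_pow₀ (by norm_num)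
          linarith
        have hP0 : (0:ℝ) ≤ P.card := Nat.cast_nonneg _
        nlinarith
      exact_mod_cast h1
    obtain ⟨S, hSP, hScard⟩ := Finset.exists_subset_card_eq hkP
    set e : Fin k → EuclideanSpace ℝ (Fin d) :=
      fun i => (S.equivFin.symm (Fin.cast hScard.symm i) : S) with he
    have heinj : Function.Injective e := by
      intro a b hab
      rw [he] at hab
      have := Subtype.val_injective hab
      have := S.equivFin.symm.injective this
      simpa [Fin.ext_iff] using this
    have heS : ∀ i, e i ∈ S := fun i => (S.equivFin.symm (Fin.cast hScard.symm i)).2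
    refine ⟨fun i => {e i}, ?_, ?_, ?_, ?_⟩
    · intro i x hx
      rw [Finset.mem_singleton] at hx
      exact hSP (hx ▸ heS i)
    · intro i j hij
      rw [Finset.disjoint_singleton]
      exact fun h => hij (heinj h)
    · intro i
      rw [Finset.card_singleton]; omega
    · intro i j _ p hp q hq
      rw [Finset.mem_singleton] at hp
      have : Metric.diam (↑({e i} : Finset (EuclideanSpace ℝ (Fin d))) :
          Set (EuclideanSpace ℝ (Fin d))) = 0 := by
        rw [Finset.coe_singleton, Metric.diam_singleton]
      rw [this, mul_zero]
      exact dist_nonneg
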